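/- Let M be a matroid on {1, …, n} with base family 𝓑, and let ℓ ≥ 0 be such that S_ℓ(𝓑) is nonempty. Then there exists a matroid on {1, …, n} whose family of bases is exactly S_ℓ(𝓑). (This is the combinatorial content of: if I is a matroidal ideal, then the ideal J_ℓ(I) generated by the ℓ-th multigraded shifts of I is matroidal for every ℓ = 0, …, projdim(I).) -/

import Mathlib

/-- Two sets are *adjacent* if each has exactly one element outside the other. -/
def AdjacentSets {α : Type*} (B C : Set α) : Prop :=
  (B \ C).ncard = 1 ∧ (C \ B).ncard = 1

/-- The *adjacency family* of a family of sets: all unions of adjacent pairs of members. -/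
def adjFam {α : Type*} (𝓕 : Set (Set α)) : Set (Set α) :=
  {U | ∃ B ∈ 𝓕, ∃ C ∈ 𝓕, AdjacentSets B C ∧ U = B ∪ C}

/-- For a family `𝓑` of subsets of `{1, …, n}` (ordered so that `i >_lex j ↔ i < j` as
integers) and `B ∈ 𝓑`, the set `set(B)` consists of all `e ∉ B` for which there exists
`t ∈ B` with `e >_lex t` (that is, `e < t`) and `(B \ {t}) ∪ {e} ∈ 𝓑`. -/
def lexSet {n : ℕ} (𝓑 : Set (Set (Fin n))) (B : Set (Fin n)) : Set (Fin n) :=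
  {e | e ∉ B ∧ ∃ t ∈ B, e < t ∧ insert e (B \ {t}) ∈ 𝓑}

/-- `S_ℓ(𝓑) = { B ∪ E : B ∈ 𝓑, E ⊆ set(B), |E| = ℓ }`, the family of supports of the
`ℓ`-th multigraded shifts of the matroidal ideal of `𝓑`. -/
def shiftFam {n : ℕ} (𝓑 : Set (Set (Fin n))) (ℓ : ℕ) : Set (Set (Fin n)) :=
  {U | ∃ B ∈ 𝓑, ∃ E, E ⊆ lexSet 𝓑 B ∧ E.ncard = ℓ ∧ U = B ∪ E}

open Set

/-- The candidate base family: spanning sets of size `rank + ℓ` all of whose elements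
are non-loops.  This is the base family of the `ℓ`-th elongation of `M` minus loops. -/
def elongBase {n : ℕ} (M : Matroid (Fin n)) (ℓ : ℕ) : Set (Set (Fin n)) :=
  {U | ∃ B, M.IsBase B ∧ B ⊆ U ∧ U.ncard = B.ncard + ℓ ∧ ∀ e ∈ U, M.Indep {e}}

/-- A non-loop outside a base can be swapped into the base. -/
private lemma exists_swap_base {n : ℕ} {M : Matroid (Fin n)} {B : Set (Fin n)} {e : Fin n}
    (hB : M.IsBase B) (he : M.Indep {e}) (heB : e ∉ B) :
    ∃ t ∈ B, t ≠ e ∧ M.IsBase (insert e (B \ {t})) := by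
  obtain ⟨B'', hB'', heB'', hsub⟩ := he.exists_isBase_subset_union_isBase hB
  have heB''' : e ∈ B'' := heB'' rfl
  have hsub' : B'' \ {e} ⊆ B := by
    intro x hx
    rcases hsub hx.1 with h | h
    · exact absurd h hx.2
    · exact h
  have hcard : B''.ncard = B.ncard := hB''.ncard_eq_ncard_of_isBase hB
  have hBpos : 1 ≤ B.ncard := by
    rw [← hcard]; exact (Set.ncard_pos (B''.toFinite)).2 ⟨e, heB'''⟩
  have hdcard : (B'' \ {e}).ncard = B.ncard - 1 := by
    rw [Set.ncard_diff_singleton_of_mem heB''', hcard]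
  have hone : (B \ B'').ncard = 1 := by
    have h1 : B \ (B'' \ {e}) = B \ B'' := by
      ext x; simp only [Set.mem_diff, Set.mem_singleton_iff]
      constructor
      · rintro ⟨hx, hx2⟩
        refine ⟨hx, fun hxB'' => hx2 ⟨hxB'', ?_⟩⟩
        rintro rfl; exact heB hx
      · rintro ⟨hx, hx2⟩; exact ⟨hx, fun h => hx2 h.1⟩
    rw [← h1, Set.ncard_diff hsub' ((B'' \ {e}).toFinite), hdcard]
    omega
  obtain ⟨t, ht⟩ := Set.ncard_eq_one.1 hone
  have htB : t ∈ B := by have := ht ▸ (Set.mem_singleton t); exact this.1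
  have htB'' : t ∉ B'' := by have := ht ▸ (Set.mem_singleton t); exact this.2
  have hte : t ≠ e := by rintro rfl; exact heB htB
  refine ⟨t, htB, hte, ?_⟩
  have hBdiff : B \ {t} = B'' \ {e} := by
    ext x; simp only [Set.mem_diff, Set.mem_singleton_iff]
    constructor
    · rintro ⟨hx, hxt⟩
      have hxB'' : x ∈ B'' := by
        by_contra hc
        have : x ∈ B \ B'' := ⟨hx, hc⟩
        rw [ht] at this; exact hxt this
      refine ⟨hxB'', ?_⟩; rintro rfl; exact heB hx
    · rintro ⟨hx, hxe⟩
      refine ⟨hsub' ⟨hx, hxe⟩, ?_⟩; rintro rfl; exact htB'' hx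
  rw [hBdiff, Set.insert_diff_singleton, Set.insert_eq_self.2 heB''']
  exact hB''

private lemma weight_swap {n : ℕ} {B : Set (Fin n)} {e t : Fin n} (ht : t ∈ B) (he : e ∉ B) :
    (∑ x ∈ ((insert e (B \ {t})).toFinite).toFinset, (x : ℕ)) + (t : ℕ)
      = (∑ x ∈ (B.toFinite).toFinset, (x : ℕ)) + (e : ℕ) := by
  have hset : ((insert e (B \ {t})).toFinite).toFinset
      = insert e ((B.toFinite).toFinset.erase t) := by
    ext x
    simp only [Set.Finite.mem_toFinset, Set.mem_insert_iff, Set.mem_diff,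
      Set.mem_singleton_iff, Finset.mem_insert, Finset.mem_erase]
    tauto
  rw [hset, Finset.sum_insert (by
    simp only [Finset.mem_erase, Set.Finite.mem_toFinset]
    exact fun h => he h.2)]
  have h2 := Finset.sum_erase_add (B.toFinite).toFinset (fun x : Fin n => (x : ℕ))
    (Set.Finite.mem_toFinset _ |>.2 ht)
  beta_reduce at h2 ⊢
  omega

private lemma shiftFam_eq_elongBase {n : ℕ} (M : Matroid (Fin n))
    (𝓑 : Set (Set (Fin n))) (h𝓑 : 𝓑 = {B | M.IsBase B}) (ℓ : ℕ) :
    shiftFam 𝓑 ℓ = elongBase M ℓ := by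
  subst h𝓑
  ext U
  constructor
  · rintro ⟨B, hB, E, hE, hEcard, rfl⟩
    have hdisj : Disjoint B E := by
      rw [Set.disjoint_right]; exact fun e heE => (hE heE).1
    refine ⟨B, hB, Set.subset_union_left, ?_, ?_⟩
    · rw [Set.ncard_union_eq hdisj (B.toFinite) (E.toFinite), hEcard]
    · rintro e (heB | heE)
      · exact hB.indep.subset (by simpa using heB)
      · obtain ⟨-, t, -, -, hB'⟩ := hE heE
        exact (Set.mem_setOf_eq ▸ hB' : M.IsBase _).indep.subset (by simp)
  · rintro ⟨B₀, hB₀, hB₀U, hcard, hnl⟩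
    -- choose a base inside U of maximal weight
    set W : Set (Fin n) → ℕ := fun B => ∑ x ∈ (B.toFinite).toFinset, (x : ℕ) with hW
    have hSfin : {B | M.IsBase B ∧ B ⊆ U}.Finite := Set.toFinite _
    obtain ⟨B, hBS, hBmax⟩ := Set.Finite.exists_maximalFor W _ hSfin ⟨B₀, hB₀, hB₀U⟩
    obtain ⟨hB, hBU⟩ := hBS
    have hcard' : U.ncard = B.ncard + ℓ := by
      rw [hcard, hB₀.ncard_eq_ncard_of_isBase hB]
    refine ⟨B, hB, U \ B, ?_, ?_, (Set.union_diff_cancel hBU).symm⟩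
    · intro e he
      refine ⟨he.2, ?_⟩
      obtain ⟨t, htB, hte, hBt⟩ := exists_swap_base hB (hnl e he.1) he.2
      refine ⟨t, htB, ?_, hBt⟩
      have hBtU : insert e (B \ {t}) ⊆ U :=
        Set.insert_subset he.1 ((Set.diff_subset).trans hBU)
      by_contra hlt
      have hlt0 : t < e := lt_of_le_of_ne (not_lt.1 hlt) hte
      have hlt' : (t : ℕ) < (e : ℕ) := hlt0
      have hws := weight_swap htB he.2
      have hle : W B ≤ W (insert e (B \ {t})) := by
        simp only [hW]; omega
      have := hBmax ⟨hBt, hBtU⟩ hle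
      simp only [hW] at this; omega
    · rw [Set.ncard_diff hBU, hcard']; omega

private lemma elongBase_exchange {n : ℕ} (M : Matroid (Fin n)) (ℓ : ℕ) :
    Matroid.ExchangeProperty (· ∈ elongBase M ℓ) := by
  intro U₁ U₂ h₁ h₂ e he
  obtain ⟨B₁, hB₁, hB₁U, hc₁, hnl₁⟩ := h₁
  obtain ⟨B₂, hB₂, hB₂U, hc₂, hnl₂⟩ := h₂
  have hcc : U₁.ncard = U₂.ncard := by
    rw [hc₁, hc₂, hB₁.ncard_eq_ncard_of_isBase hB₂]
  have hU₂U₁ : (U₂ \ U₁).Nonempty := by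
    rw [Set.nonempty_iff_ne_empty]
    intro h
    rw [Set.diff_eq_empty] at h
    have : U₂ = U₁ := Set.eq_of_subset_of_ncard_le h hcc.le (U₁.toFinite)
    exact he.2 (this ▸ he.1)
  have key : ∀ f B', f ∈ U₂ \ U₁ → M.IsBase B' → B' ⊆ insert f (U₁ \ {e}) →
      ∃ b ∈ U₂ \ U₁, insert b (U₁ \ {e}) ∈ elongBase M ℓ := by
    intro f B' hf hB' hB'sub
    refine ⟨f, hf, B', hB', hB'sub, ?_, ?_⟩
    · have h1 : f ∉ U₁ \ {e} := fun h => hf.2 h.1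
      have h2 : (U₁ \ {e}).ncard = U₁.ncard - 1 :=
        Set.ncard_diff_singleton_of_mem he.1
      have h3 : 1 ≤ U₁.ncard := (Set.ncard_pos (U₁.toFinite)).2 ⟨e, he.1⟩
      rw [Set.ncard_insert_of_notMem h1 ((U₁ \ {e}).toFinite), h2,
        hB'.ncard_eq_ncard_of_isBase hB₁]
      omega
    · rintro x (rfl | hx)
      · exact hnl₂ x hf.1
      · exact hnl₁ x hx.1
  by_cases heB₁ : e ∈ B₁
  · have heB₂ : e ∉ B₂ := fun h => he.2 (hB₂U h)
    obtain ⟨f, hf, hBf⟩ := hB₁.exchange hB₂ ⟨heB₁, heB₂⟩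
    have hfe : f ≠ e := fun h => hf.2 (h ▸ heB₁)
    by_cases hfU₁ : f ∈ U₁
    · obtain ⟨g, hg⟩ := hU₂U₁
      refine key g _ hg hBf ?_
      rintro x (rfl | hx)
      · exact Or.inr ⟨hfU₁, hfe⟩
      · exact Or.inr ⟨hB₁U hx.1, hx.2⟩
    · refine key f _ ⟨hB₂U hf.1, hfU₁⟩ hBf ?_
      rintro x (rfl | hx)
      · exact Or.inl rfl
      · exact Or.inr ⟨hB₁U hx.1, hx.2⟩
  · obtain ⟨g, hg⟩ := hU₂U₁
    refine key g _ hg hB₁ ?_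
    intro x hx
    exact Or.inr ⟨hB₁U hx, fun h => heB₁ (h ▸ hx)⟩

/-- Let `M` be a matroid on `{1, …, n}` with base family `𝓑`, and let
`ℓ ≥ 0` be such that `S_ℓ(𝓑)` is nonempty.  Then there exists a matroid on `{1, …, n}`
whose family of bases is exactly `S_ℓ(𝓑)`.  (This is the combinatorial content of: if
`I` is a matroidal ideal, then the ideal `J_ℓ(I)` generated by the `ℓ`-th multigraded
shifts of `I` is matroidal for every `ℓ = 0, …, projdim(I)`.) -/
theorem shiftFam_isBaseFamily {n : ℕ} (M : Matroid (Fin n))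
    (hE : M.E = Set.univ) (𝓑 : Set (Set (Fin n))) (h𝓑 : 𝓑 = {B | M.IsBase B})
    (ℓ : ℕ) (hne : (shiftFam 𝓑 ℓ).Nonempty) :
    ∃ M' : Matroid (Fin n), M'.E = Set.univ ∧ {B | M'.IsBase B} = shiftFam 𝓑 ℓ := by
  obtain ⟨U₀, hU₀⟩ := hne
  have heq := shiftFam_eq_elongBase M 𝓑 h𝓑 ℓ
  refine ⟨Matroid.ofIsBaseOfFinite (Set.toFinite Set.univ) (· ∈ shiftFam 𝓑 ℓ)
    ⟨U₀, hU₀⟩ ?_ (fun B _ => Set.subset_univ B), ?_, ?_⟩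
  · rw [show (fun B => B ∈ shiftFam 𝓑 ℓ) = (· ∈ elongBase M ℓ) by
      funext B; rw [heq]]
    exact elongBase_exchange M ℓ
  · simp
  · ext B; simp
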